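/- Let r = [[1, 1], [0, −1]] ∈ M_2(ℂ), T(x) = r x r*, and f = [[0,0],[0,1]]. Then T(f) = [[1,−1],[−1,1]], and for every p with 1 ≤ p < ∞ the Schatten p-norm satisfies ‖T(f)‖_p = 2 while ‖f‖_p = 1. In particular T is not a contraction on the Schatten p-class S_p^2 for any p. -/

import Mathlib

open ComplexOrder

/-- The Schatten `p`-norm of a complex matrix, computed via the eigenvalues of `xᴴ x`. -/
noncomputable def schattenNorm {n : ℕ} (p : ℝ) (x : Matrix (Fin n) (Fin n) ℂ) : ℝ :=
  (∑ i, ((Matrix.posSemidef_conjTranspose_mul_self x).1.eigenvalues i) ^ (p / 2)) ^ (1 / p)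

lemma trace_eq_sum_eigenvalues {n : Type*} [Fintype n] [DecidableEq n]
    {A : Matrix n n ℂ} (hA : A.IsHermitian) :
    A.trace = ∑ i, (hA.eigenvalues i : ℂ) := by
  nth_rewrite 1 [hA.spectral_theorem]
  rw [Unitary.conjStarAlgAut_apply, Matrix.trace_mul_cycle,
    (Matrix.mem_unitaryGroup_iff'.mp (Matrix.IsHermitian.eigenvectorUnitary hA).2), one_mul,
    Matrix.trace_diagonal]
  simp

lemma rpow_sum_two (q t : ℝ) (hq : 0 < q) (l0 l1 : ℝ)
    (hmul : l0 * l1 = 0) (hsum : l0 + l1 = t) :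
    l0 ^ q + l1 ^ q = t ^ q := by
  rcases mul_eq_zero.mp hmul with h | h <;> subst h <;>
    simp [Real.zero_rpow hq.ne', ← hsum]

theorem conj_by_r_not_contraction
    (r f : Matrix (Fin 2) (Fin 2) ℂ)
    (hr : r = !![1, 1; 0, -1]) (hf : f = !![0, 0; 0, 1]) :
    r * f * r.conjTranspose = !![1, -1; -1, 1] ∧
    ∀ p : ℝ, 1 ≤ p →
      schattenNorm p (r * f * r.conjTranspose) = 2 ∧ schattenNorm p f = 1 := by
  subst hr hf
  have hT : (!![1, 1; 0, -1] : Matrix (Fin 2) (Fin 2) ℂ) * !![0, 0; 0, 1] *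
      (!![1, 1; 0, -1] : Matrix (Fin 2) (Fin 2) ℂ).conjTranspose = !![1, -1; -1, 1] := by
    ext i j
    fin_cases i <;> fin_cases j <;>
      simp [Matrix.mul_apply, Fin.sum_univ_two, Matrix.conjTranspose_apply]
  refine ⟨hT, fun p hp => ?_⟩
  have hp0 : 0 < p := lt_of_lt_of_le one_pos hp
  have hq0 : 0 < p / 2 := by positivity
  constructor
  · rw [hT]
    set x : Matrix (Fin 2) (Fin 2) ℂ := !![1, -1; -1, 1] with hx
    have hpsd := Matrix.posSemidef_conjTranspose_mul_self x
    have hH := hpsd.1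
    -- trace and det of x.conjTranspose * x
    have htr : (x.conjTranspose * x).trace = 4 := by
      norm_num [hx, Matrix.trace_fin_two, Matrix.mul_apply, Fin.sum_univ_two,
        Matrix.conjTranspose_apply]
    have hdet : (x.conjTranspose * x).det = 0 := by
      norm_num [hx, Matrix.det_fin_two, Matrix.mul_apply, Fin.sum_univ_two,
        Matrix.conjTranspose_apply]
    have hsum : hH.eigenvalues 0 + hH.eigenvalues 1 = 4 := by
      have := trace_eq_sum_eigenvalues hH
      rw [htr, Fin.sum_univ_two] at this
      exact_mod_cast this.symm
    have hmul : hH.eigenvalues 0 * hH.eigenvalues 1 = 0 := by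
      have := hH.det_eq_prod_eigenvalues
      rw [hdet, Fin.prod_univ_two] at this
      exact RCLike.ofReal_eq_zero.mp (by exact_mod_cast this.symm)
    rw [schattenNorm, Fin.sum_univ_two, rpow_sum_two (p/2) 4 hq0 _ _ hmul hsum]
    rw [show (4:ℝ) = 2 ^ (2:ℝ) by norm_num,
      ← Real.rpow_mul (by norm_num : (0:ℝ) ≤ 2), ← Real.rpow_mul (by norm_num : (0:ℝ) ≤ 2),
      show (2:ℝ) * (p / 2) * (1 / p) = 1 by field_simp, Real.rpow_one]
  · set x : Matrix (Fin 2) (Fin 2) ℂ := !![0, 0; 0, 1] with hx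
    have hpsd := Matrix.posSemidef_conjTranspose_mul_self x
    have hH := hpsd.1
    have htr : (x.conjTranspose * x).trace = 1 := by
      simp [hx, Matrix.trace_fin_two, Matrix.mul_apply, Fin.sum_univ_two,
        Matrix.conjTranspose_apply]
    have hdet : (x.conjTranspose * x).det = 0 := by
      simp [hx, Matrix.det_fin_two, Matrix.mul_apply, Fin.sum_univ_two,
        Matrix.conjTranspose_apply]
    have hsum : hH.eigenvalues 0 + hH.eigenvalues 1 = 1 := by
      have := trace_eq_sum_eigenvalues hH
      rw [htr, Fin.sum_univ_two] at this
      exact_mod_cast this.symm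
    have hmul : hH.eigenvalues 0 * hH.eigenvalues 1 = 0 := by
      have := hH.det_eq_prod_eigenvalues
      rw [hdet, Fin.prod_univ_two] at this
      exact RCLike.ofReal_eq_zero.mp (by exact_mod_cast this.symm)
    rw [schattenNorm, Fin.sum_univ_two, rpow_sum_two (p/2) 1 hq0 _ _ hmul hsum,
      Real.one_rpow, Real.one_rpow]
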